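/- arXiv:1207.1197 — 2 statements merged into one kernel-verified Lean document; each statement's English description precedes it below -/
import Mathlib

section
/- For density matrices ρ and σ with supp(σ) ⊇ supp(ρ) (so that the relative entropy is finite), -log Tr(ρ^{1/2} σ^{1/2}) ≤ (1/2) Tr ρ(log ρ - log σ). That is, -log Q(ρ,σ) ≤ S(ρ‖σ)/2. -/
open Matrix
open scoped ComplexOrder

/-- The positive semidefinite square root (removed from Mathlib; restated with its old definition). -/
noncomputable def Matrix.PosSemidef.sqrt {n : Type*} [Fintype n] [DecidableEq n] {𝕜 : Type*} [RCLike 𝕜]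
    {A : Matrix n n 𝕜} (hA : A.PosSemidef) : Matrix n n 𝕜 :=
  hA.1.eigenvectorUnitary.1 * diagonal ((↑) ∘ (√·) ∘ hA.1.eigenvalues) *
  (star hA.1.eigenvectorUnitary : Matrix n n 𝕜)

/-- Trace norm `‖X‖₁ = Tr √(XᴴX)`. -/
noncomputable def traceNorm {n : Type*} [Fintype n] [DecidableEq n] (X : Matrix n n ℂ) : ℝ :=
  ((Matrix.posSemidef_conjTranspose_mul_self X).sqrt.trace).re

/-- Fractional power `A^s` of a positive semidefinite matrix, defined spectrally with the
convention `0 ^ s = 0` for all real `s`. -/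
noncomputable def Matrix.PosSemidef.rpow {n : Type*} [Fintype n] [DecidableEq n]
    {A : Matrix n n ℂ} (hA : A.PosSemidef) (s : ℝ) : Matrix n n ℂ :=
  hA.1.cfc (fun x => if x = 0 then 0 else x ^ s)

/-- Matrix logarithm of a positive semidefinite matrix, defined spectrally with the
convention `log 0 = 0` on the kernel. -/
noncomputable def Matrix.PosSemidef.log {n : Type*} [Fintype n] [DecidableEq n]
    {A : Matrix n n ℂ} (hA : A.PosSemidef) : Matrix n n ℂ :=
  hA.1.cfc Real.log

section Aux

variable {n : Type*} [Fintype n] [DecidableEq n]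

private lemma trace_dmd (d e : n → ℂ) (W : Matrix n n ℂ) :
    (diagonal d * W * diagonal e * star W).trace = ∑ i, ∑ j, d i * W i j * e j * star (W i j) := by
  simp only [Matrix.trace, Matrix.diag, Matrix.mul_apply, Matrix.diagonal_apply, ite_mul, mul_ite,
    zero_mul, mul_zero, Finset.sum_ite_eq, Finset.sum_ite_eq', Finset.mem_univ, if_true,
    Matrix.star_apply, Finset.sum_mul]

private lemma key_trace {A B : Matrix n n ℂ} (hA : A.IsHermitian) (hB : B.IsHermitian)
    (f g : ℝ → ℝ) :
    (hA.cfc f * hB.cfc g).trace =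
      ((∑ i, ∑ j, f (hA.eigenvalues i) * g (hB.eigenvalues j)
        * Complex.normSq ((star (hA.eigenvectorUnitary : Matrix n n ℂ)
            * (hB.eigenvectorUnitary : Matrix n n ℂ)) i j) : ℝ) : ℂ) := by
  set U : Matrix n n ℂ := (hA.eigenvectorUnitary : Matrix n n ℂ) with hU
  set V : Matrix n n ℂ := (hB.eigenvectorUnitary : Matrix n n ℂ) with hV
  set W : Matrix n n ℂ := star U * V with hW
  have hsW : star W = star V * U := by simp [hW]
  have hUU : star U * U = 1 := Unitary.coe_star_mul_self hA.eigenvectorUnitary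
  have hUU2 : U * star U = 1 := Unitary.coe_mul_star_self hA.eigenvectorUnitary
  have h1 : hA.cfc f * hB.cfc g =
      U * (diagonal (RCLike.ofReal ∘ f ∘ hA.eigenvalues) * W *
        diagonal (RCLike.ofReal ∘ g ∘ hB.eigenvalues) * star W) * star U := by
    simp only [Matrix.IsHermitian.cfc, Unitary.conjStarAlgAut_apply, hW, hsW, ← hU, ← hV]
    simp only [Matrix.star_mul, star_star, Matrix.mul_assoc, hUU2, Matrix.mul_one]
  rw [h1, Matrix.trace_mul_cycle, hUU, Matrix.one_mul, trace_dmd]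
  push_cast
  refine Finset.sum_congr rfl fun i _ => Finset.sum_congr rfl fun j _ => ?_
  have hco : ((RCLike.ofReal : ℝ → ℂ)) = Complex.ofReal := rfl
  simp only [Function.comp_apply, hco, RCLike.star_def]
  rw [show ((f (hA.eigenvalues i) : ℂ) * W i j * (g (hB.eigenvalues j)) * (starRingEnd ℂ) (W i j))
      = (f (hA.eigenvalues i) : ℂ) * (g (hB.eigenvalues j)) * (W i j * (starRingEnd ℂ) (W i j)) by ring,
    Complex.mul_conj]

private lemma aux_cfc_id {A : Matrix n n ℂ} (hA : A.IsHermitian) : hA.cfc id = A := by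
  rw [Matrix.IsHermitian.cfc]
  conv_rhs => rw [hA.spectral_theorem]
  simp [Function.comp_def]

private lemma aux_trace_eq {A : Matrix n n ℂ} (hA : A.IsHermitian) :
    A.trace = ((∑ i, hA.eigenvalues i : ℝ) : ℂ) := by
  conv_lhs => rw [hA.spectral_theorem, Unitary.conjStarAlgAut_apply]
  rw [Matrix.trace_mul_cycle, Unitary.coe_star_mul_self hA.eigenvectorUnitary, Matrix.one_mul,
    Matrix.trace_diagonal]
  push_cast
  rfl

private lemma aux_key_self {A : Matrix n n ℂ} (hA : A.IsHermitian) (f g : ℝ → ℝ) :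
    (hA.cfc f * hA.cfc g).trace =
      ((∑ i, f (hA.eigenvalues i) * g (hA.eigenvalues i) : ℝ) : ℂ) := by
  rw [key_trace hA hA f g]
  have h1 : star (hA.eigenvectorUnitary : Matrix n n ℂ) * (hA.eigenvectorUnitary : Matrix n n ℂ)
      = 1 := Unitary.coe_star_mul_self hA.eigenvectorUnitary
  rw [h1]
  norm_cast
  refine Finset.sum_congr rfl fun i _ => ?_
  simp [Matrix.one_apply, apply_ite Complex.normSq, mul_ite, mul_one, mul_zero,
    Finset.sum_ite_eq, Finset.sum_ite_eq']

private lemma aux_row_sum {A B : Matrix n n ℂ} (hA : A.IsHermitian) (hB : B.IsHermitian) (i : n) :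
    ∑ j, Complex.normSq ((star (hA.eigenvectorUnitary : Matrix n n ℂ)
        * (hB.eigenvectorUnitary : Matrix n n ℂ)) i j) = 1 := by
  set U : Matrix n n ℂ := (hA.eigenvectorUnitary : Matrix n n ℂ)
  set V : Matrix n n ℂ := (hB.eigenvectorUnitary : Matrix n n ℂ)
  set W : Matrix n n ℂ := star U * V with hW
  have hWW : W * star W = 1 := by
    rw [hW, Matrix.star_mul, star_star]
    calc star U * V * (star V * U) = star U * (V * star V) * U := by
          simp only [Matrix.mul_assoc]
      _ = 1 := by
          have hVV : V * star V = 1 := Unitary.coe_mul_star_self hB.eigenvectorUnitary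
          have hUU : star U * U = 1 := Unitary.coe_star_mul_self hA.eigenvectorUnitary
          rw [hVV, Matrix.mul_one, hUU]
  have h1 : (W * star W) i i = 1 := by rw [hWW]; simp [Matrix.one_apply]
  rw [Matrix.mul_apply] at h1
  have h2 : ((∑ j, Complex.normSq (W i j) : ℝ) : ℂ) = 1 := by
    rw [← h1]
    push_cast
    refine Finset.sum_congr rfl fun j _ => ?_
    rw [Matrix.star_apply, RCLike.star_def, Complex.mul_conj]
  exact_mod_cast h2

private lemma aux_supp {ρ σ : Matrix n n ℂ} (hρ : ρ.PosSemidef) (hσ : σ.PosSemidef)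
    (hsupp : ∀ v : n → ℂ, σ.mulVec v = 0 → ρ.mulVec v = 0)
    (j : n) (hqj : hσ.1.eigenvalues j = 0) (i : n) :
    hρ.1.eigenvalues i * Complex.normSq ((star (hρ.1.eigenvectorUnitary : Matrix n n ℂ)
        * (hσ.1.eigenvectorUnitary : Matrix n n ℂ)) i j) = 0 := by
  set U : Matrix n n ℂ := (hρ.1.eigenvectorUnitary : Matrix n n ℂ)
  set V : Matrix n n ℂ := (hσ.1.eigenvectorUnitary : Matrix n n ℂ)
  set W : Matrix n n ℂ := star U * V with hW
  set v : n → ℂ := ⇑(hσ.1.eigenvectorBasis j) with hv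
  have h0 : σ *ᵥ v = 0 := by
    rw [hv, hσ.1.mulVec_eigenvectorBasis, hqj]
    simp
  have h1 : ρ *ᵥ v = 0 := hsupp v h0
  have hUU : star U * U = 1 := Unitary.coe_star_mul_self hρ.1.eigenvectorUnitary
  have h2 : star U * ρ = diagonal (RCLike.ofReal ∘ hρ.1.eigenvalues) * star U := by
    conv_lhs => rw [hρ.1.spectral_theorem, Unitary.conjStarAlgAut_apply]
    simp only [← Matrix.mul_assoc]
    rw [hUU, Matrix.one_mul]
  have h3 : (diagonal (RCLike.ofReal ∘ hρ.1.eigenvalues) * star U) *ᵥ v = 0 := by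
    rw [← h2, ← Matrix.mulVec_mulVec, h1, Matrix.mulVec_zero]
  have h4 : star U *ᵥ v = fun i => W i j := by
    have : v = V *ᵥ Pi.single j 1 := by
      rw [hv, ← Matrix.IsHermitian.eigenvectorUnitary_mulVec]
    rw [this, Matrix.mulVec_mulVec, ← hW, Matrix.mulVec_single]
    simp
    rfl
  have h5 : (hρ.1.eigenvalues i : ℂ) * W i j = 0 := by
    have := congrFun h3 i
    rw [← Matrix.mulVec_mulVec, h4] at this
    rwa [Matrix.mulVec_diagonal] at this
  rcases mul_eq_zero.mp h5 with h | h
  · have : hρ.1.eigenvalues i = 0 := by exact_mod_cast h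
    rw [this, zero_mul]
  · rw [h]
    simp

private lemma real_core {ι κ : Type*} [Fintype ι] [Fintype κ] (p : ι → ℝ) (q : κ → ℝ)
    (c : ι → κ → ℝ)
    (hp : ∀ i, 0 ≤ p i) (hq : ∀ j, 0 ≤ q j) (hc : ∀ i j, 0 ≤ c i j)
    (hp1 : ∑ i, p i = 1) (hrow : ∀ i, ∑ j, c i j = 1)
    (hz : ∀ i j, q j = 0 → p i * c i j = 0) :
    -Real.log (∑ i, ∑ j, Real.sqrt (p i) * Real.sqrt (q j) * c i j)
      ≤ (1/2) * ((∑ i, p i * Real.log (p i)) - ∑ i, ∑ j, p i * Real.log (q j) * c i j) := by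
  classical
  set w : ι × κ → ℝ := fun x => p x.1 * c x.1 x.2 with hw
  set z : ι × κ → ℝ := fun x => if p x.1 = 0 then 1 else Real.sqrt (q x.2 / p x.1) with hzdef
  have hw0 : ∀ x : ι × κ, 0 ≤ w x := fun x => mul_nonneg (hp _) (hc _ _)
  have hz0 : ∀ x : ι × κ, 0 ≤ z x := by
    intro x; by_cases h : p x.1 = 0 <;> simp [hzdef, h, Real.sqrt_nonneg]
  have hw1 : ∑ x : ι × κ, w x = 1 := by
    rw [Fintype.sum_prod_type]
    simp only [hw, ← Finset.mul_sum]
    simp only [hrow, mul_one, hp1]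
  have hwz : ∀ x : ι × κ, q x.2 = 0 → w x = 0 := fun x h => hz x.1 x.2 h
  have amgm := Real.geom_mean_le_arith_mean_weighted Finset.univ w z
    (fun x _ => hw0 x) hw1 (fun x _ => hz0 x)
  have hQ : ∑ x : ι × κ, w x * z x = ∑ i, ∑ j, Real.sqrt (p i) * Real.sqrt (q j) * c i j := by
    rw [Fintype.sum_prod_type]
    refine Finset.sum_congr rfl fun i _ => Finset.sum_congr rfl fun j _ => ?_
    by_cases h : p i = 0
    · simp [hw, hzdef, h]
    · simp only [hw, hzdef, if_neg h]
      have hppos : 0 < p i := lt_of_le_of_ne (hp i) (Ne.symm h)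
      have hsp : Real.sqrt (p i) ≠ 0 := ne_of_gt (Real.sqrt_pos.2 hppos)
      rw [Real.sqrt_div (hq j) (p i)]
      field_simp
      linear_combination (-(c i j * Real.sqrt (q j))) * (Real.mul_self_sqrt (hp i))
  have hfac : ∀ x : ι × κ, 0 < z x ^ w x := by
    intro x
    rcases eq_or_lt_of_le (hz0 x) with h0 | hpos
    · have hzx : z x = 0 := h0.symm
      have hpx : p x.1 ≠ 0 := by
        intro h; simp [hzdef, h] at hzx
      have hq0 : q x.2 = 0 := by
        by_contra hq0
        have : 0 < q x.2 / p x.1 := div_pos (lt_of_le_of_ne (hq _) (Ne.symm hq0))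
          (lt_of_le_of_ne (hp _) (Ne.symm hpx))
        simp [hzdef, hpx] at hzx
        exact absurd hzx (ne_of_gt (Real.sqrt_pos.2 this))
      have hwx : w x = 0 := hwz x hq0
      rw [hwx, Real.rpow_zero]; norm_num
    · exact Real.rpow_pos_of_pos hpos _
  have hprodpos : 0 < ∏ x : ι × κ, z x ^ w x :=
    Finset.prod_pos fun x _ => hfac x
  have hlogprod : Real.log (∏ x : ι × κ, z x ^ w x) = ∑ x : ι × κ, w x * Real.log (z x) := by
    rw [Real.log_prod fun x _ => (hfac x).ne']
    refine Finset.sum_congr rfl fun x _ => ?_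
    rcases eq_or_lt_of_le (hz0 x) with h0 | hpos
    · have hwx : w x = 0 := by
        have hzx : z x = 0 := h0.symm
        have hpx : p x.1 ≠ 0 := by intro h; simp [hzdef, h] at hzx
        have hq0 : q x.2 = 0 := by
          by_contra hq0
          have : 0 < q x.2 / p x.1 := div_pos (lt_of_le_of_ne (hq _) (Ne.symm hq0))
            (lt_of_le_of_ne (hp _) (Ne.symm hpx))
          simp [hzdef, hpx] at hzx
          exact absurd hzx (ne_of_gt (Real.sqrt_pos.2 this))
        exact hwz x hq0
      simp [hwx]
    · rw [Real.log_rpow hpos]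
  have hsum : ∑ x : ι × κ, w x * Real.log (z x)
      = (1/2) * ((∑ i, ∑ j, p i * Real.log (q j) * c i j) - ∑ i, p i * Real.log (p i)) := by
    have hterm : ∀ x : ι × κ, w x * Real.log (z x)
        = (1/2) * (p x.1 * Real.log (q x.2) * c x.1 x.2
            - p x.1 * Real.log (p x.1) * c x.1 x.2) := by
      intro x
      by_cases hpx : p x.1 = 0
      · simp [hw, hzdef, hpx]
      by_cases hcx : c x.1 x.2 = 0
      · simp [hw, hzdef, hcx]
      have hqx : q x.2 ≠ 0 := by
        intro h
        exact absurd (hz x.1 x.2 h) (mul_ne_zero hpx hcx)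
      simp only [hw, hzdef, if_neg hpx]
      rw [Real.log_sqrt (div_nonneg (hq _) (hp _)), Real.log_div hqx hpx]
      ring
    rw [Finset.sum_congr rfl fun x _ => hterm x, ← Finset.mul_sum, Finset.sum_sub_distrib,
      Fintype.sum_prod_type, Fintype.sum_prod_type]
    congr 2
    refine Finset.sum_congr rfl fun i _ => ?_
    simp only [← Finset.mul_sum, hrow, mul_one]
  have hQpos : 0 < ∑ i, ∑ j, Real.sqrt (p i) * Real.sqrt (q j) * c i j := by
    rw [← hQ]; exact lt_of_lt_of_le hprodpos amgm
  have hlogle : Real.log (∏ x : ι × κ, z x ^ w x)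
      ≤ Real.log (∑ i, ∑ j, Real.sqrt (p i) * Real.sqrt (q j) * c i j) := by
    apply Real.log_le_log hprodpos
    rw [← hQ]; exact amgm
  rw [hlogprod, hsum] at hlogle
  linarith

end Aux

/-- For density matrices with `supp σ ⊇ supp ρ`:
`-log Tr(ρ^{1/2} σ^{1/2}) ≤ S(ρ‖σ)/2`. -/
theorem stmt6 {n : Type*} [Fintype n] [DecidableEq n]
    {ρ σ : Matrix n n ℂ} (hρ : ρ.PosSemidef) (hσ : σ.PosSemidef)
    (hρ1 : ρ.trace = 1) (hσ1 : σ.trace = 1)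
    (hsupp : ∀ v : n → ℂ, σ.mulVec v = 0 → ρ.mulVec v = 0) :
    -Real.log (((hρ.sqrt * hσ.sqrt).trace).re)
      ≤ (1 / 2) * ((ρ * (hρ.log - hσ.log)).trace).re := by
  have hsq1 : hρ.sqrt = hρ.1.cfc Real.sqrt := rfl
  have hsq2 : hσ.sqrt = hσ.1.cfc Real.sqrt := rfl
  have hQtr : ((hρ.sqrt * hσ.sqrt).trace).re
      = ∑ i, ∑ j, Real.sqrt (hρ.1.eigenvalues i) * Real.sqrt (hσ.1.eigenvalues j)
          * Complex.normSq ((star (hρ.1.eigenvectorUnitary : Matrix n n ℂ)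
            * (hσ.1.eigenvectorUnitary : Matrix n n ℂ)) i j) := by
    rw [hsq1, hsq2, key_trace hρ.1 hσ.1, Complex.ofReal_re]
  have e1 : (ρ * hρ.log).trace
      = ((∑ i, hρ.1.eigenvalues i * Real.log (hρ.1.eigenvalues i) : ℝ) : ℂ) := by
    rw [show ρ * hρ.log = hρ.1.cfc id * hρ.1.cfc Real.log by
      rw [aux_cfc_id hρ.1]; rfl]
    rw [aux_key_self hρ.1 id Real.log]
    simp [id_eq]
  have e2 : (ρ * hσ.log).trace
      = ((∑ i, ∑ j, hρ.1.eigenvalues i * Real.log (hσ.1.eigenvalues j)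
          * Complex.normSq ((star (hρ.1.eigenvectorUnitary : Matrix n n ℂ)
            * (hσ.1.eigenvectorUnitary : Matrix n n ℂ)) i j) : ℝ) : ℂ) := by
    rw [show ρ * hσ.log = hρ.1.cfc id * hσ.1.cfc Real.log by
      rw [aux_cfc_id hρ.1]; rfl]
    rw [key_trace hρ.1 hσ.1 id Real.log]
    simp [id_eq]
  have hStr : ((ρ * (hρ.log - hσ.log)).trace).re
      = (∑ i, hρ.1.eigenvalues i * Real.log (hρ.1.eigenvalues i))
        - ∑ i, ∑ j, hρ.1.eigenvalues i * Real.log (hσ.1.eigenvalues j)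
          * Complex.normSq ((star (hρ.1.eigenvectorUnitary : Matrix n n ℂ)
            * (hσ.1.eigenvectorUnitary : Matrix n n ℂ)) i j) := by
    rw [Matrix.mul_sub, Matrix.trace_sub, e1, e2, Complex.sub_re, Complex.ofReal_re,
      Complex.ofReal_re]
  have hp1 : ∑ i, hρ.1.eigenvalues i = 1 := by
    have := aux_trace_eq hρ.1
    rw [hρ1] at this
    exact_mod_cast this.symm
  rw [hQtr, hStr]
  exact real_core (hρ.1.eigenvalues) (hσ.1.eigenvalues) _
    hρ.eigenvalues_nonneg hσ.eigenvalues_nonneg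
    (fun i j => Complex.normSq_nonneg _)
    hp1 (aux_row_sum hρ.1 hσ.1)
    (fun i j h => aux_supp hρ hσ hsupp j h i)
end

section
/- For positive semidefinite matrices A, B with Tr(A+B) = 1, chaining gives 1 - ‖A-B‖₁ ≤ 2‖A^{1/2}B^{1/2}‖₁ ≤ √(1 - ‖A-B‖₁²); i.e., the sandwich bound 1 - T ≤ F ≤ √(1-T²). -/
open Matrix
open scoped ComplexOrder

namespace SandwichAux

variable {n : Type*} [Fintype n] [DecidableEq n]

lemma trace_diagonal_mul (d : n → ℂ) (S : Matrix n n ℂ) :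
    (Matrix.diagonal d * S).trace = ∑ i, d i * S i i := by
  simp [Matrix.trace, Matrix.diag, Matrix.mul_apply, Matrix.diagonal_apply, ite_mul]

section herm
variable {M : Matrix n n ℂ} (hM : M.IsHermitian)

lemma cfc_def (f : ℝ → ℝ) : hM.cfc f = (hM.eigenvectorUnitary : Matrix n n ℂ) *
    Matrix.diagonal (RCLike.ofReal ∘ f ∘ hM.eigenvalues) * star (hM.eigenvectorUnitary : Matrix n n ℂ) := by
  rw [Matrix.IsHermitian.cfc, Unitary.conjStarAlgAut_apply]

lemma evU_mul_star :
    (hM.eigenvectorUnitary : Matrix n n ℂ) * star (hM.eigenvectorUnitary : Matrix n n ℂ) = 1 :=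
  (Matrix.mem_unitaryGroup_iff).mp hM.eigenvectorUnitary.2

lemma star_mul_evU :
    star (hM.eigenvectorUnitary : Matrix n n ℂ) * (hM.eigenvectorUnitary : Matrix n n ℂ) = 1 :=
  Unitary.star_mul_self_of_mem hM.eigenvectorUnitary.2

/-- Quadratic form of `R` at the `i`-th eigenvector of `M`. -/
noncomputable def qf (R : Matrix n n ℂ) (i : n) : ℂ :=
  (star (hM.eigenvectorUnitary : Matrix n n ℂ) * R * (hM.eigenvectorUnitary : Matrix n n ℂ)) i i

lemma trace_eq_sum_qf (R : Matrix n n ℂ) : R.trace = ∑ i, qf hM R i := by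
  have h : (star (hM.eigenvectorUnitary : Matrix n n ℂ) * R *
      (hM.eigenvectorUnitary : Matrix n n ℂ)).trace = R.trace := by
    rw [Matrix.trace_mul_comm, ← Matrix.mul_assoc, evU_mul_star, Matrix.one_mul]
  rw [← h]
  rfl

lemma qf_eq_dot (R : Matrix n n ℂ) (i : n) :
    qf hM R i = dotProduct (star (fun k => (hM.eigenvectorUnitary : Matrix n n ℂ) k i))
      (R *ᵥ (fun k => (hM.eigenvectorUnitary : Matrix n n ℂ) k i)) := by
  simp only [qf, Matrix.mul_apply, dotProduct, Matrix.mulVec, Matrix.star_apply,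
    Pi.star_apply, Finset.sum_mul, Finset.mul_sum]
  rw [Finset.sum_comm]
  refine Finset.sum_congr rfl fun j _ => Finset.sum_congr rfl fun k _ => by ring

lemma qf_one (i : n) : qf hM 1 i = 1 := by
  rw [qf, Matrix.mul_one, star_mul_evU, Matrix.one_apply_eq]

lemma qf_nonneg {R : Matrix n n ℂ} (hR : R.PosSemidef) (i : n) : 0 ≤ qf hM R i := by
  rw [qf_eq_dot]; exact hR.dotProduct_mulVec_nonneg _

lemma qf_re_nonneg {R : Matrix n n ℂ} (hR : R.PosSemidef) (i : n) : 0 ≤ (qf hM R i).re :=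
  (Complex.nonneg_iff.mp (qf_nonneg hM hR i)).1

lemma qf_sub (R S : Matrix n n ℂ) (i : n) : qf hM (R - S) i = qf hM R i - qf hM S i := by
  simp [qf, Matrix.mul_sub, Matrix.sub_mul]

lemma qf_add (R S : Matrix n n ℂ) (i : n) : qf hM (R + S) i = qf hM R i + qf hM S i := by
  simp [qf, Matrix.mul_add, Matrix.add_mul]

lemma qf_self (i : n) : qf hM M i = (hM.eigenvalues i : ℂ) := by
  have h := hM.conjStarAlgAut_star_eigenvectorUnitary
  simp only [Unitary.conjStarAlgAut_star_apply, Unitary.coe_star] at h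
  rw [qf, h]
  simp

lemma trace_cfc_mul (f : ℝ → ℝ) (R : Matrix n n ℂ) :
    (hM.cfc f * R).trace = ∑ i, ((f (hM.eigenvalues i) : ℝ) : ℂ) * qf hM R i := by
  have h : hM.cfc f * R = (hM.eigenvectorUnitary : Matrix n n ℂ) *
      (Matrix.diagonal (RCLike.ofReal ∘ f ∘ hM.eigenvalues) *
        (star (hM.eigenvectorUnitary : Matrix n n ℂ) * R)) := by
    rw [cfc_def]
    simp only [Matrix.mul_assoc]
  rw [h, Matrix.trace_mul_comm, Matrix.mul_assoc, trace_diagonal_mul]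
  rfl

lemma trace_cfc (f : ℝ → ℝ) :
    (hM.cfc f).trace = ∑ i, ((f (hM.eigenvalues i) : ℝ) : ℂ) := by
  have := trace_cfc_mul hM f 1
  rw [Matrix.mul_one] at this
  rw [this]
  exact Finset.sum_congr rfl fun i _ => by rw [qf_one, mul_one]

lemma conj_mul_conj (X Y : Matrix n n ℂ) :
    ((hM.eigenvectorUnitary : Matrix n n ℂ) * X * star (hM.eigenvectorUnitary : Matrix n n ℂ)) *
    ((hM.eigenvectorUnitary : Matrix n n ℂ) * Y * star (hM.eigenvectorUnitary : Matrix n n ℂ)) =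
    (hM.eigenvectorUnitary : Matrix n n ℂ) * (X * Y) *
      star (hM.eigenvectorUnitary : Matrix n n ℂ) := by
  have h1 := star_mul_evU hM
  calc ((hM.eigenvectorUnitary : Matrix n n ℂ) * X * star (hM.eigenvectorUnitary : Matrix n n ℂ)) *
      ((hM.eigenvectorUnitary : Matrix n n ℂ) * Y * star (hM.eigenvectorUnitary : Matrix n n ℂ))
      = (hM.eigenvectorUnitary : Matrix n n ℂ) * (X * ((star (hM.eigenvectorUnitary : Matrix n n ℂ)
        * (hM.eigenvectorUnitary : Matrix n n ℂ)) * (Y * star (hM.eigenvectorUnitary :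
        Matrix n n ℂ)))) := by simp only [Matrix.mul_assoc]
    _ = _ := by rw [h1, Matrix.one_mul]; simp only [Matrix.mul_assoc]

lemma cfc_mul_cfc (f g : ℝ → ℝ) :
    hM.cfc f * hM.cfc g = hM.cfc (fun x => f x * g x) := by
  rw [cfc_def, cfc_def, cfc_def, conj_mul_conj,
    Matrix.diagonal_mul_diagonal]
  have h : (fun i => (RCLike.ofReal ∘ f ∘ hM.eigenvalues) i * (RCLike.ofReal ∘ g ∘ hM.eigenvalues) i)
      = (RCLike.ofReal ∘ (fun x => f x * g x) ∘ hM.eigenvalues : n → ℂ) := by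
    funext i; simp
  rw [h]

lemma cfc_congr {f g : ℝ → ℝ} (h : ∀ i, f (hM.eigenvalues i) = g (hM.eigenvalues i)) :
    hM.cfc f = hM.cfc g := by
  rw [Matrix.IsHermitian.cfc, Matrix.IsHermitian.cfc]
  have h' : (RCLike.ofReal ∘ f ∘ hM.eigenvalues : n → ℂ) = RCLike.ofReal ∘ g ∘ hM.eigenvalues := by
    funext i; simp [h i]
  rw [h']

lemma cfc_id : hM.cfc (fun x => x) = M := by
  have := hM.spectral_theorem
  rw [Unitary.conjStarAlgAut_apply] at this
  rw [cfc_def]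
  exact this.symm

lemma cfc_one : hM.cfc (fun _ => 1) = 1 := by
  rw [cfc_def]
  have : Matrix.diagonal (RCLike.ofReal ∘ (fun _ : ℝ => (1:ℝ)) ∘ hM.eigenvalues) =
      (1 : Matrix n n ℂ) := by
    rw [← Matrix.diagonal_one]
    congr 1
  rw [this, Matrix.mul_one, evU_mul_star]

lemma cfc_sub (f g : ℝ → ℝ) :
    hM.cfc (fun x => f x - g x) = hM.cfc f - hM.cfc g := by
  have h : (RCLike.ofReal ∘ (fun x => f x - g x) ∘ hM.eigenvalues : n → ℂ)
      = fun i => (RCLike.ofReal ∘ f ∘ hM.eigenvalues) i - (RCLike.ofReal ∘ g ∘ hM.eigenvalues) i := by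
    funext i; simp
  rw [cfc_def, cfc_def, cfc_def, h, ← Matrix.diagonal_sub, Matrix.mul_sub, Matrix.sub_mul]

lemma cfc_add (f g : ℝ → ℝ) :
    hM.cfc (fun x => f x + g x) = hM.cfc f + hM.cfc g := by
  have h : (RCLike.ofReal ∘ (fun x => f x + g x) ∘ hM.eigenvalues : n → ℂ)
      = fun i => (RCLike.ofReal ∘ f ∘ hM.eigenvalues) i + (RCLike.ofReal ∘ g ∘ hM.eigenvalues) i := by
    funext i; simp
  rw [cfc_def, cfc_def, cfc_def, h, ← Matrix.diagonal_add, Matrix.mul_add, Matrix.add_mul]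

lemma cfc_isHermitian (f : ℝ → ℝ) : (hM.cfc f).IsHermitian := by
  rw [cfc_def, Matrix.star_eq_conjTranspose]
  refine Matrix.isHermitian_mul_mul_conjTranspose _ ?_
  refine Matrix.isHermitian_diagonal_of_self_adjoint _ ?_
  show star _ = _
  funext i
  simp

lemma cfc_posSemidef (f : ℝ → ℝ) (hf : ∀ x, 0 ≤ f x) : (hM.cfc f).PosSemidef := by
  rw [cfc_def, Matrix.star_eq_conjTranspose]
  refine Matrix.PosSemidef.mul_mul_conjTranspose_same ?_ _
  refine Matrix.posSemidef_diagonal_iff.mpr fun i => ?_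
  simpa using Complex.zero_le_real.mpr (hf _)

lemma cfc_id' : hM.cfc (fun x => x) = M := cfc_id hM

end herm

lemma sqrt_eq_cfc {R : Matrix n n ℂ} (hR : R.PosSemidef) : hR.sqrt = hR.1.cfc Real.sqrt := rfl

lemma _root_.Matrix.PosSemidef.posSemidef_sqrt {R : Matrix n n ℂ} (hR : R.PosSemidef) :
    hR.sqrt.PosSemidef := by
  rw [sqrt_eq_cfc]; exact cfc_posSemidef hR.1 _ Real.sqrt_nonneg

lemma _root_.Matrix.PosSemidef.sqrt_mul_self {R : Matrix n n ℂ} (hR : R.PosSemidef) :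
    hR.sqrt * hR.sqrt = R := by
  rw [sqrt_eq_cfc, cfc_mul_cfc]
  exact (cfc_congr hR.1 fun i => Real.mul_self_sqrt (hR.eigenvalues_nonneg i)).trans (cfc_id hR.1)

open scoped MatrixOrder in
lemma eq_sqrt_of_sq_eq' {P R : Matrix n n ℂ} (hP : P.PosSemidef) (hR : R.PosSemidef)
    (h : P ^ 2 = R) : P = hR.sqrt :=
  (CFC.mul_self_eq_mul_self_iff P hR.sqrt hP.nonneg hR.posSemidef_sqrt.nonneg).mp
    (by rw [← sq, h, hR.sqrt_mul_self])

lemma traceNorm'_eq_sum (X : Matrix n n ℂ) :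
    ((Matrix.posSemidef_conjTranspose_mul_self X).sqrt.trace).re =
      ∑ i, Real.sqrt ((Matrix.posSemidef_conjTranspose_mul_self X).1.eigenvalues i) := by
  rw [sqrt_eq_cfc, trace_cfc, Complex.re_sum]
  simp

lemma traceNorm'_nonneg (X : Matrix n n ℂ) :
    0 ≤ ((Matrix.posSemidef_conjTranspose_mul_self X).sqrt.trace).re := by
  rw [traceNorm'_eq_sum]
  exact Finset.sum_nonneg fun i _ => Real.sqrt_nonneg _

lemma traceNorm'_hermitian {X : Matrix n n ℂ} (hX : X.IsHermitian) :
    ((Matrix.posSemidef_conjTranspose_mul_self X).sqrt.trace).re = ∑ i, |hX.eigenvalues i| := by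
  have habs : (hX.cfc (fun x => |x|)).PosSemidef :=
    cfc_posSemidef hX _ (fun x => abs_nonneg x)
  have hsq : (hX.cfc (fun x => |x|)) ^ 2 = Xᴴ * X := by
    rw [pow_two, cfc_mul_cfc]
    have h1 : (fun x : ℝ => |x| * |x|) = fun x : ℝ => x * x :=
      funext fun x => abs_mul_abs_self x
    rw [h1, ← cfc_mul_cfc, cfc_id', hX.eq]
  have h2 := eq_sqrt_of_sq_eq' habs (Matrix.posSemidef_conjTranspose_mul_self X) hsq
  rw [← h2, trace_cfc, Complex.re_sum]
  simp

lemma re_dot_le (u w : n → ℂ) :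
    (dotProduct (star u) w).re ≤
      Real.sqrt (dotProduct (star u) u).re * Real.sqrt (dotProduct (star w) w).re := by
  have h := norm_inner_le_norm (𝕜 := ℂ)
    (WithLp.toLp 2 u) (WithLp.toLp 2 w)
  rw [EuclideanSpace.inner_toLp_toLp] at h
  have h1 : ‖WithLp.toLp 2 u‖ = Real.sqrt (dotProduct (star u) u).re := by
    rw [norm_eq_sqrt_re_inner (𝕜 := ℂ), EuclideanSpace.inner_toLp_toLp, dotProduct_comm]
    rfl
  have h2 : ‖WithLp.toLp 2 w‖ = Real.sqrt (dotProduct (star w) w).re := by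
    rw [norm_eq_sqrt_re_inner (𝕜 := ℂ), EuclideanSpace.inner_toLp_toLp, dotProduct_comm]
    rfl
  calc (dotProduct (star u) w).re ≤ ‖dotProduct (star u) w‖ :=
        Complex.re_le_norm _
    _ ≤ _ := by rw [← h1, ← h2, dotProduct_comm]; exact h

lemma dot_mulVec_self (Y : Matrix n n ℂ) (v : n → ℂ) :
    dotProduct (star (Y *ᵥ v)) (Y *ᵥ v)
      = dotProduct (star v) ((Yᴴ * Y) *ᵥ v) := by
  rw [Matrix.star_mulVec, ← Matrix.mulVec_mulVec, Matrix.dotProduct_mulVec (star v)]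

lemma re_trace_le_traceNorm' (X : Matrix n n ℂ) :
    X.trace.re ≤ ((Matrix.posSemidef_conjTranspose_mul_self X).sqrt.trace).re := by
  have hNp : (Xᴴ * X).PosSemidef := Matrix.posSemidef_conjTranspose_mul_self X
  rw [trace_eq_sum_qf hNp.1 X, traceNorm'_eq_sum, Complex.re_sum]
  refine Finset.sum_le_sum fun i _ => ?_
  rw [qf_eq_dot]
  refine le_trans (re_dot_le _ _) ?_
  set v : n → ℂ := fun k => (hNp.1.eigenvectorUnitary : Matrix n n ℂ) k i with hv
  have hvv : dotProduct (star v) v = 1 := by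
    have h := qf_one hNp.1 i
    rw [qf_eq_dot, Matrix.one_mulVec] at h
    exact h
  have hXv : (dotProduct (star (X *ᵥ v)) (X *ᵥ v)).re = hNp.1.eigenvalues i := by
    rw [dot_mulVec_self]
    have h := qf_self hNp.1 i
    rw [qf_eq_dot] at h
    rw [← hv] at h
    rw [h]
    simp
  rw [hvv, hXv]
  simp

end SandwichAux

namespace SandwichAux

/-- sign function -/
noncomputable def sgn (x : ℝ) : ℝ := if x < 0 then -1 else if x = 0 then 0 else 1

lemma sgn_mul_self (x : ℝ) : sgn x * x = |x| := by
  unfold sgn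
  rcases lt_trichotomy x 0 with h | h | h
  · rw [if_pos h, abs_of_neg h]; ring
  · simp [h]
  · rw [if_neg (not_lt.mpr h.le), if_neg h.ne', abs_of_pos h]; ring

lemma one_sub_sgn_nonneg (x : ℝ) : 0 ≤ 1 - sgn x := by
  unfold sgn; split_ifs <;> norm_num

lemma one_add_sgn_nonneg (x : ℝ) : 0 ≤ 1 + sgn x := by
  unfold sgn; split_ifs <;> norm_num

end SandwichAux

open SandwichAux in
theorem sandwich_part_one {n : Type*} [Fintype n] [DecidableEq n]
    {A B : Matrix n n ℂ} (hA : A.PosSemidef) (hB : B.PosSemidef)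
    (htr : A.trace + B.trace = 1) :
    1 - ((Matrix.posSemidef_conjTranspose_mul_self (A - B)).sqrt.trace).re ≤
      2 * ((Matrix.posSemidef_conjTranspose_mul_self (hA.sqrt * hB.sqrt)).sqrt.trace).re := by
  have hsA : (hA.sqrt).PosSemidef := hA.posSemidef_sqrt
  have hsB : (hB.sqrt).PosSemidef := hB.posSemidef_sqrt
  set sA := hA.sqrt with hsAdef
  set sB := hB.sqrt with hsBdef
  have hsAA : sA * sA = A := hA.sqrt_mul_self
  have hsBB : sB * sB = B := hB.sqrt_mul_self
  have htr_re : A.trace.re + B.trace.re = 1 := by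
    have h := congrArg Complex.re htr
    simpa using h
  have hΔ : (A - B).IsHermitian := hA.1.sub hB.1
  have hTdef : ((Matrix.posSemidef_conjTranspose_mul_self (A - B)).sqrt.trace).re
      = ∑ j, |hΔ.eigenvalues j| := traceNorm'_hermitian hΔ
  have part1 : 1 - ((Matrix.posSemidef_conjTranspose_mul_self (A - B)).sqrt.trace).re ≤
      2 * ((Matrix.posSemidef_conjTranspose_mul_self (sA * sB)).sqrt.trace).re := by
    have hP : (sA - sB).IsHermitian := hsA.1.sub hsB.1
    set C := hP.cfc sgn with hC
    set Pabs := hP.cfc (fun x => |x|) with hPabsdef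
    have hid : hP.cfc (fun x => x) = sA - sB := cfc_id hP
    have hCP : C * (sA - sB) = Pabs := by
      rw [← hid, hC, cfc_mul_cfc]
      exact cfc_congr hP (fun i => sgn_mul_self _)
    have hPC : (sA - sB) * C = Pabs := by
      rw [← hid, hC, cfc_mul_cfc]
      refine cfc_congr hP (fun i => ?_)
      rw [mul_comm]; exact sgn_mul_self _
    have ha : ∑ i, hP.eigenvalues i ^ 2 ≤ (Pabs * (sA + sB)).trace.re := by
      rw [hPabsdef, trace_cfc_mul, Complex.re_sum]
      refine Finset.sum_le_sum fun i _ => ?_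
      have hq1 : 0 ≤ (qf hP ((sA + sB) - (sA - sB)) i).re := by
        have h : (sA + sB) - (sA - sB) = sB + sB := by abel
        rw [h]; exact qf_re_nonneg hP (hsB.add hsB) i
      have hq2 : 0 ≤ (qf hP ((sA + sB) + (sA - sB)) i).re := by
        have h : (sA + sB) + (sA - sB) = sA + sA := by abel
        rw [h]; exact qf_re_nonneg hP (hsA.add hsA) i
      rw [qf_sub] at hq1
      rw [qf_add] at hq2
      rw [qf_self] at hq1 hq2
      simp only [Complex.sub_re, Complex.add_re, Complex.ofReal_re] at hq1 hq2
      rw [Complex.re_ofReal_mul]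
      nlinarith [abs_nonneg (hP.eigenvalues i), sq_abs (hP.eigenvalues i),
        abs_le.mpr (⟨by linarith, by linarith⟩ :
          -(qf hP (sA + sB) i).re ≤ hP.eigenvalues i ∧
            hP.eigenvalues i ≤ (qf hP (sA + sB) i).re)]
    have hb : (C * (A - B)).trace = (Pabs * (sA + sB)).trace := by
      have h2D : (A - B) + (A - B) = (sA - sB) * (sA + sB) + (sA + sB) * (sA - sB) := by
        rw [← hsAA, ← hsBB]; noncomm_ring
      have e1 : (C * ((sA - sB) * (sA + sB))).trace = (Pabs * (sA + sB)).trace := by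
        rw [← Matrix.mul_assoc, hCP]
      have e2 : (C * ((sA + sB) * (sA - sB))).trace = (Pabs * (sA + sB)).trace := by
        rw [Matrix.trace_mul_comm, Matrix.mul_assoc, hPC, Matrix.trace_mul_comm]
      have e3 : (C * (A - B)).trace + (C * (A - B)).trace
          = (Pabs * (sA + sB)).trace + (Pabs * (sA + sB)).trace := by
        calc (C * (A - B)).trace + (C * (A - B)).trace
            = (C * (A - B) + C * (A - B)).trace := (Matrix.trace_add _ _).symm
          _ = (C * ((A - B) + (A - B))).trace := by rw [Matrix.mul_add]
          _ = (C * ((sA - sB) * (sA + sB)) + C * ((sA + sB) * (sA - sB))).trace := by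
              rw [h2D, Matrix.mul_add]
          _ = _ := by rw [Matrix.trace_add, e1, e2]
      linear_combination e3 / 2
    have hps1 : ((1 : Matrix n n ℂ) - C).PosSemidef := by
      have h1m : (1 : Matrix n n ℂ) - C = hP.cfc (fun x => 1 - sgn x) := by
        have h := cfc_sub hP (fun _ => 1) sgn
        rw [cfc_one] at h
        exact h.symm
      rw [h1m]
      exact cfc_posSemidef hP _ one_sub_sgn_nonneg
    have hps2 : ((1 : Matrix n n ℂ) + C).PosSemidef := by
      have h1p : (1 : Matrix n n ℂ) + C = hP.cfc (fun x => 1 + sgn x) := by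
        have h := cfc_add hP (fun _ => 1) sgn
        rw [cfc_one] at h
        exact h.symm
      rw [h1p]
      exact cfc_posSemidef hP _ one_add_sgn_nonneg
    have hc : (C * (A - B)).trace.re
        ≤ ((Matrix.posSemidef_conjTranspose_mul_self (A - B)).sqrt.trace).re := by
      rw [hTdef, Matrix.trace_mul_comm]
      have h : ((A - B) * C).trace = (hΔ.cfc (fun x => x) * C).trace := by rw [cfc_id]
      rw [h, trace_cfc_mul, Complex.re_sum]
      refine Finset.sum_le_sum fun j _ => ?_
      rw [Complex.re_ofReal_mul]
      have hb1 : 0 ≤ (qf hΔ (1 - C) j).re := qf_re_nonneg hΔ hps1 j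
      have hb2 : 0 ≤ (qf hΔ (1 + C) j).re := qf_re_nonneg hΔ hps2 j
      rw [qf_sub] at hb1
      rw [qf_add] at hb2
      rw [qf_one] at hb1 hb2
      simp only [Complex.sub_re, Complex.add_re, Complex.one_re] at hb1 hb2
      have habs : |(qf hΔ C j).re| ≤ 1 := abs_le.mpr ⟨by linarith, by linarith⟩
      calc hΔ.eigenvalues j * (qf hΔ C j).re
          ≤ |hΔ.eigenvalues j * (qf hΔ C j).re| := le_abs_self _
        _ = |hΔ.eigenvalues j| * |(qf hΔ C j).re| := abs_mul _ _
        _ ≤ |hΔ.eigenvalues j| * 1 := mul_le_mul_of_nonneg_left habs (abs_nonneg _)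
        _ = |hΔ.eigenvalues j| := mul_one _
    have hPP : ((sA - sB) * (sA - sB)).trace.re = ∑ i, hP.eigenvalues i ^ 2 := by
      have h : (sA - sB) * (sA - sB) = hP.cfc (fun x => x * x) := by
        rw [← cfc_mul_cfc, hid]
      rw [h, trace_cfc, Complex.re_sum]
      exact Finset.sum_congr rfl fun i _ => by simp [sq]
    have hPP2 : ((sA - sB) * (sA - sB)).trace.re
        = A.trace.re + B.trace.re - 2 * (sA * sB).trace.re := by
      have h : (sA - sB) * (sA - sB) = A + B - (sA * sB + sB * sA) := by
        rw [← hsAA, ← hsBB]; noncomm_ring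
      have h2 : (sB * sA).trace = (sA * sB).trace := Matrix.trace_mul_comm _ _
      rw [h, Matrix.trace_sub, Matrix.trace_add, Matrix.trace_add, h2]
      simp only [Complex.sub_re, Complex.add_re]
      ring
    have hfin : (sA * sB).trace.re
        ≤ ((Matrix.posSemidef_conjTranspose_mul_self (sA * sB)).sqrt.trace).re :=
      re_trace_le_traceNorm' _
    have hbre := congrArg Complex.re hb
    linarith [ha, hc, hPP, hPP2, hfin, htr_re, hbre]
  exact part1

namespace SandwichAux

lemma classical_fvdg {ι : Type*} [Fintype ι] (a b : ι → ℝ) (ha : ∀ i, 0 ≤ a i)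
    (hb : ∀ i, 0 ≤ b i) (hsum : ∑ i, (a i + b i) = 1) :
    (2 * ∑ i, Real.sqrt (b i) * Real.sqrt (a i)) ^ 2 ≤ 1 - (∑ i, |a i - b i|) ^ 2 := by
  have key : ∀ i, |a i - b i| = |Real.sqrt (a i) - Real.sqrt (b i)| *
      (Real.sqrt (a i) + Real.sqrt (b i)) := by
    intro i
    have h1 : Real.sqrt (a i) * Real.sqrt (a i) = a i := Real.mul_self_sqrt (ha i)
    have h2 : Real.sqrt (b i) * Real.sqrt (b i) = b i := Real.mul_self_sqrt (hb i)
    have h3 : (Real.sqrt (a i) - Real.sqrt (b i)) * (Real.sqrt (a i) + Real.sqrt (b i))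
        = a i - b i := by linear_combination h1 - h2
    rw [← h3, abs_mul, abs_of_nonneg (add_nonneg (Real.sqrt_nonneg _) (Real.sqrt_nonneg _))]
  have hCS := Finset.sum_mul_sq_le_sq_mul_sq Finset.univ
    (fun i => |Real.sqrt (a i) - Real.sqrt (b i)|) (fun i => Real.sqrt (a i) + Real.sqrt (b i))
  have e0 : ∑ i, |a i - b i| = ∑ i, |Real.sqrt (a i) - Real.sqrt (b i)| *
      (Real.sqrt (a i) + Real.sqrt (b i)) := Finset.sum_congr rfl fun i _ => key i
  have e1 : ∑ i, |Real.sqrt (a i) - Real.sqrt (b i)| ^ 2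
      = 1 - 2 * ∑ i, Real.sqrt (b i) * Real.sqrt (a i) := by
    have h : ∀ i, |Real.sqrt (a i) - Real.sqrt (b i)| ^ 2
        = (a i + b i) - 2 * (Real.sqrt (b i) * Real.sqrt (a i)) := by
      intro i
      rw [sq_abs, sub_sq, Real.sq_sqrt (ha i), Real.sq_sqrt (hb i)]
      ring
    rw [Finset.sum_congr rfl fun i _ => h i, Finset.sum_sub_distrib, hsum, ← Finset.mul_sum]
  have e2 : ∑ i, (Real.sqrt (a i) + Real.sqrt (b i)) ^ 2
      = 1 + 2 * ∑ i, Real.sqrt (b i) * Real.sqrt (a i) := by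
    have h : ∀ i, (Real.sqrt (a i) + Real.sqrt (b i)) ^ 2
        = (a i + b i) + 2 * (Real.sqrt (b i) * Real.sqrt (a i)) := by
      intro i
      rw [add_sq, Real.sq_sqrt (ha i), Real.sq_sqrt (hb i)]
      ring
    rw [Finset.sum_congr rfl fun i _ => h i, Finset.sum_add_distrib, hsum, ← Finset.mul_sum]
  rw [e0]
  rw [e1, e2] at hCS
  nlinarith [hCS]

end SandwichAux

open SandwichAux in
theorem sandwich_part_two {n : Type*} [Fintype n] [DecidableEq n]
    {A B : Matrix n n ℂ} (hA : A.PosSemidef) (hB : B.PosSemidef)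
    (htr : A.trace + B.trace = 1) :
    2 * ((Matrix.posSemidef_conjTranspose_mul_self (hA.sqrt * hB.sqrt)).sqrt.trace).re ≤
      Real.sqrt (1 - (((Matrix.posSemidef_conjTranspose_mul_self (A - B)).sqrt.trace).re) ^ 2)
    := by
  have hsA : (hA.sqrt).PosSemidef := hA.posSemidef_sqrt
  have hsB : (hB.sqrt).PosSemidef := hB.posSemidef_sqrt
  set sA := hA.sqrt with hsAdef
  set sB := hB.sqrt with hsBdef
  have hsAA : sA * sA = A := hA.sqrt_mul_self
  have hsBB : sB * sB = B := hB.sqrt_mul_self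
  clear_value sA sB
  have htr_re : A.trace.re + B.trace.re = 1 := by
    have h := congrArg Complex.re htr
    simpa using h
  have hΔ : (A - B).IsHermitian := hA.1.sub hB.1
  have hTdef : ((Matrix.posSemidef_conjTranspose_mul_self (A - B)).sqrt.trace).re
      = ∑ j, |hΔ.eigenvalues j| := traceNorm'_hermitian hΔ
  set X := sA * sB with hX
  clear_value X
  have ha0 : ∀ j, 0 ≤ (qf hΔ A j).re := fun j => qf_re_nonneg hΔ hA j
  have hb0 : ∀ j, 0 ≤ (qf hΔ B j).re := fun j => qf_re_nonneg hΔ hB j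
  have hab : ∀ j, (qf hΔ A j).re - (qf hΔ B j).re = hΔ.eigenvalues j := by
    intro j
    have h := qf_self hΔ j
    rw [qf_sub] at h
    have h2 := congrArg Complex.re h
    simpa using h2
  have hsum : ∑ j, ((qf hΔ A j).re + (qf hΔ B j).re) = 1 := by
    have h1 : ∑ j, (qf hΔ A j).re = A.trace.re := by
      rw [trace_eq_sum_qf hΔ A, Complex.re_sum]
    have h2 : ∑ j, (qf hΔ B j).re = B.trace.re := by
      rw [trace_eq_sum_qf hΔ B, Complex.re_sum]
    rw [Finset.sum_add_distrib, h1, h2, htr_re]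
  -- the contraction U
  have hN : (Xᴴ * X).IsHermitian := (Matrix.posSemidef_conjTranspose_mul_self X).1
  have hd0 : ∀ i, 0 ≤ hN.eigenvalues i := fun i =>
    (Matrix.posSemidef_conjTranspose_mul_self X).eigenvalues_nonneg i
  set fpinv : ℝ → ℝ := fun x => if x = 0 then 0 else (Real.sqrt x)⁻¹ with hfp
  have hGh : (hN.cfc fpinv).IsHermitian := cfc_isHermitian hN fpinv
  have hUX : (hN.cfc fpinv * Xᴴ * X).trace = ((∑ i, Real.sqrt (hN.eigenvalues i) : ℝ) : ℂ) := by
    have h1 : hN.cfc fpinv * Xᴴ * X = hN.cfc (fun x => fpinv x * x) := by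
      rw [← cfc_mul_cfc hN fpinv (fun x => x), cfc_id, Matrix.mul_assoc]
    have h2 : hN.cfc (fun x => fpinv x * x) = hN.cfc Real.sqrt := by
      refine cfc_congr hN fun i => ?_
      rcases eq_or_lt_of_le (hd0 i) with hd | hd
      · simp [hfp, ← hd]
      · have hs : Real.sqrt (hN.eigenvalues i) ≠ 0 := ne_of_gt (Real.sqrt_pos.mpr hd)
        rw [hfp]
        simp only [if_neg (ne_of_gt hd)]
        field_simp
        rw [Real.sq_sqrt (hd0 i)]
    rw [h1, h2, trace_cfc, Complex.ofReal_sum]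
  have hUU : (hN.cfc fpinv * Xᴴ)ᴴ * (hN.cfc fpinv * Xᴴ)
      = X * hN.cfc (fun x => fpinv x * fpinv x) * Xᴴ := by
    rw [Matrix.conjTranspose_mul, Matrix.conjTranspose_conjTranspose, hGh.eq]
    have h : X * hN.cfc fpinv * (hN.cfc fpinv * Xᴴ)
        = X * (hN.cfc fpinv * hN.cfc fpinv) * Xᴴ := by noncomm_ring
    rw [h, cfc_mul_cfc]
  have hKh : (X * hN.cfc (fun x => fpinv x * fpinv x) * Xᴴ)ᴴ
      = X * hN.cfc (fun x => fpinv x * fpinv x) * Xᴴ := by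
    rw [Matrix.conjTranspose_mul, Matrix.conjTranspose_mul,
      Matrix.conjTranspose_conjTranspose, (cfc_isHermitian hN _).eq, Matrix.mul_assoc]
  have hKK : (X * hN.cfc (fun x => fpinv x * fpinv x) * Xᴴ)
      * (X * hN.cfc (fun x => fpinv x * fpinv x) * Xᴴ)
      = X * hN.cfc (fun x => fpinv x * fpinv x) * Xᴴ := by
    have h1 : (X * hN.cfc (fun x => fpinv x * fpinv x) * Xᴴ)
        * (X * hN.cfc (fun x => fpinv x * fpinv x) * Xᴴ)
        = X * (hN.cfc (fun x => fpinv x * fpinv x) * (Xᴴ * X) *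
            hN.cfc (fun x => fpinv x * fpinv x)) * Xᴴ := by noncomm_ring
    have h2 : hN.cfc (fun x => fpinv x * fpinv x) * (Xᴴ * X) *
        hN.cfc (fun x => fpinv x * fpinv x) = hN.cfc (fun x => fpinv x * fpinv x) := by
      have e : hN.cfc (fun x => fpinv x * fpinv x) * hN.cfc (fun x => x) *
          hN.cfc (fun x => fpinv x * fpinv x) = hN.cfc (fun x => fpinv x * fpinv x) := by
        rw [cfc_mul_cfc, cfc_mul_cfc]
        refine cfc_congr hN fun i => ?_
        rcases eq_or_lt_of_le (hd0 i) with hd | hd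
        · simp [hfp, ← hd]
        · have hs : Real.sqrt (hN.eigenvalues i) ≠ 0 := ne_of_gt (Real.sqrt_pos.mpr hd)
          have hne : hN.eigenvalues i ≠ 0 := ne_of_gt hd
          have hinv : (Real.sqrt (hN.eigenvalues i))⁻¹ * (Real.sqrt (hN.eigenvalues i))⁻¹
              = (hN.eigenvalues i)⁻¹ := by
            rw [← mul_inv, Real.mul_self_sqrt (hd0 i)]
          rw [hfp]
          simp only [if_neg hne]
          rw [hinv, inv_mul_cancel₀ hne, one_mul]
      rw [cfc_id] at e
      exact e
    rw [h1, h2]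
  have hcontr : ((1 : Matrix n n ℂ) - (hN.cfc fpinv * Xᴴ)ᴴ * (hN.cfc fpinv * Xᴴ)).PosSemidef := by
    have h1 : (1 : Matrix n n ℂ) - (hN.cfc fpinv * Xᴴ)ᴴ * (hN.cfc fpinv * Xᴴ)
        = ((1 : Matrix n n ℂ) - X * hN.cfc (fun x => fpinv x * fpinv x) * Xᴴ)ᴴ *
          ((1 : Matrix n n ℂ) - X * hN.cfc (fun x => fpinv x * fpinv x) * Xᴴ) := by
      rw [hUU]
      have h2 : ((1 : Matrix n n ℂ) - X * hN.cfc (fun x => fpinv x * fpinv x) * Xᴴ)ᴴ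
          = (1 : Matrix n n ℂ) - X * hN.cfc (fun x => fpinv x * fpinv x) * Xᴴ := by
        rw [Matrix.conjTranspose_sub, Matrix.conjTranspose_one, hKh]
      have h3 : ((1 : Matrix n n ℂ) - X * hN.cfc (fun x => fpinv x * fpinv x) * Xᴴ) *
          ((1 : Matrix n n ℂ) - X * hN.cfc (fun x => fpinv x * fpinv x) * Xᴴ)
          = 1 - X * hN.cfc (fun x => fpinv x * fpinv x) * Xᴴ
            - X * hN.cfc (fun x => fpinv x * fpinv x) * Xᴴ
            + (X * hN.cfc (fun x => fpinv x * fpinv x) * Xᴴ) *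
              (X * hN.cfc (fun x => fpinv x * fpinv x) * Xᴴ) := by noncomm_ring
      rw [h2, h3, hKK]
      abel
    rw [h1]
    exact Matrix.posSemidef_conjTranspose_mul_self _
  have hUvec : ∀ v : n → ℂ,
      (dotProduct (star ((hN.cfc fpinv * Xᴴ) *ᵥ v)) ((hN.cfc fpinv * Xᴴ) *ᵥ v)).re
        ≤ (dotProduct (star v) v).re := by
    intro v
    have h0 := hcontr.dotProduct_mulVec_nonneg v
    have h1 : dotProduct (star v)
          (((1 : Matrix n n ℂ) - (hN.cfc fpinv * Xᴴ)ᴴ * (hN.cfc fpinv * Xᴴ)) *ᵥ v)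
        = dotProduct (star v) v
          - dotProduct (star ((hN.cfc fpinv * Xᴴ) *ᵥ v)) ((hN.cfc fpinv * Xᴴ) *ᵥ v) := by
      rw [Matrix.sub_mulVec, dotProduct_sub, Matrix.one_mulVec, dot_mulVec_self]
    rw [h1] at h0
    have h2 := (Complex.nonneg_iff.mp h0).1
    simp only [Complex.sub_re] at h2
    linarith
  -- main estimate
  have hmain : ((Matrix.posSemidef_conjTranspose_mul_self X).sqrt.trace).re
      ≤ ∑ j, Real.sqrt ((qf hΔ B j).re) * Real.sqrt ((qf hΔ A j).re) := by
    have hstep : ((Matrix.posSemidef_conjTranspose_mul_self X).sqrt.trace).re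
        = ((hN.cfc fpinv * Xᴴ) * X).trace.re := by
      have e1 : ((Matrix.posSemidef_conjTranspose_mul_self X).sqrt.trace).re
          = ∑ i, Real.sqrt (hN.eigenvalues i) := traceNorm'_eq_sum X
      rw [e1, hUX]
      simp
    rw [hstep]
    have hcyc : ((hN.cfc fpinv * Xᴴ) * X).trace = (sB * ((hN.cfc fpinv * Xᴴ) * sA)).trace := by
      have e1 : ((hN.cfc fpinv * Xᴴ) * X).trace = ((hN.cfc fpinv * Xᴴ) * (sA * sB)).trace :=
        congrArg (fun Z => ((hN.cfc fpinv * Xᴴ) * Z).trace) hX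
      rw [e1, ← Matrix.mul_assoc]
      exact Matrix.trace_mul_comm _ _
    rw [hcyc, trace_eq_sum_qf hΔ, Complex.re_sum]
    refine Finset.sum_le_sum fun j _ => ?_
    rw [qf_eq_dot]
    have hrw : dotProduct
          (star fun k => (hΔ.eigenvectorUnitary : Matrix n n ℂ) k j)
          ((sB * ((hN.cfc fpinv * Xᴴ) * sA)) *ᵥ fun k => (hΔ.eigenvectorUnitary : Matrix n n ℂ) k j)
        = dotProduct
          (star (sB *ᵥ fun k => (hΔ.eigenvectorUnitary : Matrix n n ℂ) k j))
          (((hN.cfc fpinv * Xᴴ) * sA) *ᵥ fun k => (hΔ.eigenvectorUnitary : Matrix n n ℂ) k j) := by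
      rw [← Matrix.mulVec_mulVec, Matrix.dotProduct_mulVec, Matrix.star_mulVec, hsB.1.eq]
    rw [hrw]
    refine le_trans (re_dot_le _ _) ?_
    have hf1 : (dotProduct
          (star (sB *ᵥ fun k => (hΔ.eigenvectorUnitary : Matrix n n ℂ) k j))
          (sB *ᵥ fun k => (hΔ.eigenvectorUnitary : Matrix n n ℂ) k j)).re
        = (qf hΔ B j).re := by
      rw [dot_mulVec_self, hsB.1.eq, hsBB, qf_eq_dot]
    have hf2 : (dotProduct
          (star (((hN.cfc fpinv * Xᴴ) * sA) *ᵥ fun k => (hΔ.eigenvectorUnitary : Matrix n n ℂ) k j))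
          (((hN.cfc fpinv * Xᴴ) * sA) *ᵥ fun k => (hΔ.eigenvectorUnitary : Matrix n n ℂ) k j)).re
        ≤ (qf hΔ A j).re := by
      rw [← Matrix.mulVec_mulVec]
      refine le_trans (hUvec _) ?_
      have h : (dotProduct
            (star (sA *ᵥ fun k => (hΔ.eigenvectorUnitary : Matrix n n ℂ) k j))
            (sA *ᵥ fun k => (hΔ.eigenvectorUnitary : Matrix n n ℂ) k j)).re
          = (qf hΔ A j).re := by
        rw [dot_mulVec_self, hsA.1.eq, hsAA, qf_eq_dot]
      exact le_of_eq h
    rw [hf1]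
    exact mul_le_mul_of_nonneg_left (Real.sqrt_le_sqrt hf2) (Real.sqrt_nonneg _)
  -- assemble
  have hcl : (2 * ∑ j, Real.sqrt ((qf hΔ B j).re) * Real.sqrt ((qf hΔ A j).re)) ^ 2
      ≤ 1 - (∑ j, |(qf hΔ A j).re - (qf hΔ B j).re|) ^ 2 :=
    classical_fvdg (fun j => (qf hΔ A j).re) (fun j => (qf hΔ B j).re) ha0 hb0 hsum
  have hTeq : ((Matrix.posSemidef_conjTranspose_mul_self (A - B)).sqrt.trace).re
      = ∑ j, |(qf hΔ A j).re - (qf hΔ B j).re| := by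
    rw [hTdef]
    exact Finset.sum_congr rfl fun j _ => by rw [hab j]
  have htn0 : 0 ≤ ((Matrix.posSemidef_conjTranspose_mul_self X).sqrt.trace).re :=
    traceNorm'_nonneg X
  have hs0 : 0 ≤ ∑ j, Real.sqrt ((qf hΔ B j).re) * Real.sqrt ((qf hΔ A j).re) :=
    Finset.sum_nonneg fun j _ => mul_nonneg (Real.sqrt_nonneg _) (Real.sqrt_nonneg _)
  rw [hTeq]
  have hy : 0 ≤ 1 - (∑ j, |(qf hΔ A j).re - (qf hΔ B j).re|) ^ 2 := by
    nlinarith [hcl, sq_nonneg (2 * ∑ j, Real.sqrt ((qf hΔ B j).re) * Real.sqrt ((qf hΔ A j).re))]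
  have hx2 : 0 ≤ 2 * ((Matrix.posSemidef_conjTranspose_mul_self X).sqrt.trace).re := by
    linarith
  refine (Real.le_sqrt hx2 hy).mpr ?_
  nlinarith [hmain, hcl, htn0, hs0]

/-- Sandwich bound `1 - T ≤ F ≤ √(1 - T²)` for positive semidefinite `A`, `B` with
`Tr A + Tr B = 1`. -/
theorem stmt8 {n : Type*} [Fintype n] [DecidableEq n]
    {A B : Matrix n n ℂ} (hA : A.PosSemidef) (hB : B.PosSemidef)
    (htr : A.trace + B.trace = 1) :
    1 - traceNorm (A - B) ≤ 2 * traceNorm (hA.sqrt * hB.sqrt) ∧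
    2 * traceNorm (hA.sqrt * hB.sqrt) ≤ Real.sqrt (1 - (traceNorm (A - B)) ^ 2) := by
  exact ⟨sandwich_part_one hA hB htr, sandwich_part_two hA hB htr⟩
end
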